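/- Let H be a finite simple bipartite graph with bipartition V(H) = A ∪ B and maximum degree D such that every vertex of A has degree at most D/2, and let c > 0 be a real number. Then the edge set of H can be partitioned into three subgraphs H₀, H₁, H₂ such that: every vertex of V(H₀) ∩ B has degree at least D/2 in H₀; every vertex of V(H₀) ∩ A has degree at least c in H₀; H₁ is c-degenerate; and Δ(H₂) ≤ D/2. -/

import Mathlib

noncomputable def maxDeg {V : Type*} [Fintype V] (G : SimpleGraph V) : ℕ := by
  classical exact G.maxDegree

noncomputable def deg {V : Type*} [Fintype V] (G : SimpleGraph V) (v : V) : ℕ := by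
  classical exact G.degree v

/-- G is c-degenerate (real threshold c): every subgraph has a vertex of degree ≤ c. -/
def DegenR {V : Type*} (c : ℝ) (G : SimpleGraph V) : Prop :=
  ∀ s : Finset V, s.Nonempty → ∃ v ∈ s, (({u | u ∈ s ∧ G.Adj v u} : Set V).ncard : ℝ) ≤ c

section Aux
variable {V : Type*} [Fintype V]

lemma deg_eq_ncard (G : SimpleGraph V) (v : V) :
    deg G v = (G.neighborSet v).ncard := by
  classical
  simp [deg, SimpleGraph.degree, SimpleGraph.neighborFinset, Set.ncard_eq_toFinset_card']

lemma maxDeg_le (G : SimpleGraph V) (k : ℕ)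
    (h : ∀ v, deg G v ≤ k) : maxDeg G ≤ k := by
  classical
  simp only [maxDeg]
  apply SimpleGraph.maxDegree_le_of_forall_degree_le
  intro v
  simpa [deg] using h v

lemma deg_mono {G G' : SimpleGraph V} (h : G ≤ G') (v : V) : deg G v ≤ deg G' v := by
  rw [deg_eq_ncard, deg_eq_ncard]
  exact Set.ncard_le_ncard (fun u hu => h hu) (Set.toFinite _)

def indG (H : SimpleGraph V) (S : Finset V) : SimpleGraph V where
  Adj x y := H.Adj x y ∧ x ∈ S ∧ y ∈ S
  symm := ⟨by rintro x y ⟨h, hx, hy⟩; exact ⟨h.symm, hy, hx⟩⟩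
  loopless := ⟨by rintro x ⟨h, _⟩; exact H.irrefl h⟩

def starG (G : SimpleGraph V) (v : V) : SimpleGraph V where
  Adj x y := G.Adj x y ∧ (x = v ∨ y = v)
  symm := ⟨by rintro x y ⟨h, hxy⟩; exact ⟨h.symm, hxy.symm⟩⟩
  loopless := ⟨by rintro x ⟨h, _⟩; exact G.irrefl h⟩

omit [Fintype V] in
lemma disjoint_of_adj {G G' : SimpleGraph V}
    (h : ∀ x y, G.Adj x y → G'.Adj x y → False) : Disjoint G G' := by
  rw [disjoint_iff]
  ext x y
  simp only [SimpleGraph.inf_adj, SimpleGraph.bot_adj, iff_false, not_and]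
  exact fun h1 h2 => h x y h1 h2

omit [Fintype V] in
lemma indG_mono (H : SimpleGraph V) {S T : Finset V} (h : S ⊆ T) : indG H S ≤ indG H T := by
  rintro x y ⟨ha, hx, hy⟩
  exact ⟨ha, h hx, h hy⟩

omit [Fintype V] in
lemma starG_le (G : SimpleGraph V) (v : V) : starG G v ≤ G := fun _ _ h => h.1

omit [Fintype V] in
lemma indG_le (H : SimpleGraph V) (S : Finset V) : indG H S ≤ H := fun _ _ h => h.1

lemma deg_bot (v : V) : deg (⊥ : SimpleGraph V) v = 0 := by
  have : (⊥ : SimpleGraph V).neighborSet v = ∅ := by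
    ext u; simp
  rw [deg_eq_ncard, this, Set.ncard_empty]

lemma ns_sup (G G' : SimpleGraph V) (v : V) :
    (G ⊔ G').neighborSet v = G.neighborSet v ∪ G'.neighborSet v := by
  ext u; simp [SimpleGraph.mem_neighborSet]

omit [Fintype V] in
lemma no_adj_erase [DecidableEq V] {H : SimpleGraph V} {S : Finset V} {a : V}
    {G : SimpleGraph V} (hG : G ≤ indG H (S.erase a)) {x y : V} (hxy : G.Adj x y) :
    x ≠ a ∧ y ≠ a := by
  have := hG hxy
  exact ⟨(Finset.mem_erase.mp this.2.1).1, (Finset.mem_erase.mp this.2.2).1⟩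

lemma star_sup_erase [DecidableEq V] (H : SimpleGraph V) (S : Finset V) {a : V} (ha : a ∈ S) :
    starG (indG H S) a ⊔ indG H (S.erase a) = indG H S := by
  ext x y
  simp only [SimpleGraph.sup_adj, starG, indG, Finset.mem_erase]
  constructor
  · rintro (⟨h, _⟩ | ⟨h, ⟨_, hx⟩, ⟨_, hy⟩⟩)
    · exact h
    · exact ⟨h, hx, hy⟩
  · rintro ⟨h, hx, hy⟩
    by_cases hxa : x = a
    · exact Or.inl ⟨⟨h, hx, hy⟩, Or.inl hxa⟩
    by_cases hya : y = a
    · exact Or.inl ⟨⟨h, hx, hy⟩, Or.inr hya⟩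
    · exact Or.inr ⟨h, ⟨hxa, hx⟩, ⟨hya, hy⟩⟩

open scoped Classical in
noncomputable def process (H : SimpleGraph V) (A B : Set V) (c : ℝ) (D : ℕ) :
    Finset V → Finset V × SimpleGraph V × SimpleGraph V := fun S =>
  if h1 : ∃ a ∈ S, a ∈ A ∧ (deg (indG H S) a : ℝ) < c then
    let r := process H A B c D (S.erase h1.choose)
    (r.1, starG (indG H S) h1.choose ⊔ r.2.1, r.2.2)
  else if h2 : ∃ b ∈ S, b ∈ B ∧ (deg (indG H S) b : ℝ) < (D : ℝ) / 2 then
    let r := process H A B c D (S.erase h2.choose)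
    (r.1, r.2.1, starG (indG H S) h2.choose ⊔ r.2.2)
  else (S, ⊥, ⊥)
termination_by S => S.card
decreasing_by
  · exact Finset.card_erase_lt_of_mem h1.choose_spec.1
  · exact Finset.card_erase_lt_of_mem h2.choose_spec.1

lemma process_spec (H : SimpleGraph V) (A B : Set V) (hdisj : Disjoint A B)
    (hbip : ∀ u v : V, H.Adj u v → (u ∈ A ∧ v ∈ B) ∨ (u ∈ B ∧ v ∈ A))
    (c : ℝ) (hc : 0 ≤ c) (D : ℕ) (S : Finset V) :
    (process H A B c D S).1 ⊆ S ∧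
    (process H A B c D S).2.1 ≤ indG H S ∧
    (process H A B c D S).2.2 ≤ indG H S ∧
    indG H (process H A B c D S).1 ⊔ (process H A B c D S).2.1 ⊔ (process H A B c D S).2.2
      = indG H S ∧
    Disjoint (indG H (process H A B c D S).1) (process H A B c D S).2.1 ∧
    Disjoint (indG H (process H A B c D S).1) (process H A B c D S).2.2 ∧
    Disjoint (process H A B c D S).2.1 (process H A B c D S).2.2 ∧
    (¬ ∃ a ∈ (process H A B c D S).1, a ∈ A ∧
        (deg (indG H (process H A B c D S).1) a : ℝ) < c) ∧
    (¬ ∃ b ∈ (process H A B c D S).1, b ∈ B ∧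
        (deg (indG H (process H A B c D S).1) b : ℝ) < (D : ℝ) / 2) ∧
    (∀ a ∈ A, (deg (process H A B c D S).2.1 a : ℝ) ≤ c) ∧
    (∀ b ∈ B, (deg (process H A B c D S).2.2 b : ℝ) ≤ (D : ℝ) / 2) := by
  classical
  induction S using process.induct H A B c D with
  | case1 S h IH =>
    rw [process]; simp only [dif_pos h]
    obtain ⟨haS, haA, hadeg⟩ := h.choose_spec
    set a := h.choose with ha_def
    obtain ⟨IH1, IH2, IH3, IH4, IH5, IH6, IH7, IH8, IH9, IH10, IH11⟩ := IH
    set r := process H A B c D (S.erase a) with hr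
    have hK' : indG H (S.erase a) ≤ indG H S := indG_mono H (Finset.erase_subset a S)
    have hst : starG (indG H S) a ≤ indG H S := starG_le _ _
    have hr1 : indG H r.1 ≤ indG H (S.erase a) := indG_mono H IH1
    refine ⟨IH1.trans (Finset.erase_subset a S), sup_le hst (IH2.trans hK'), IH3.trans hK',
      ?_, ?_, IH6, ?_, IH8, IH9, ?_, IH11⟩
    · have hcomm : indG H r.1 ⊔ (starG (indG H S) a ⊔ r.2.1) ⊔ r.2.2
          = starG (indG H S) a ⊔ (indG H r.1 ⊔ r.2.1 ⊔ r.2.2) := by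
        ext x y
        simp only [SimpleGraph.sup_adj]
        tauto
      rw [hcomm, IH4, star_sup_erase H S haS]
    · rw [disjoint_sup_right]
      refine ⟨disjoint_of_adj fun x y h1 h2 => ?_, IH5⟩
      rcases h2.2 with rfl | rfl
      · exact (no_adj_erase hr1 h1).1 rfl
      · exact (no_adj_erase hr1 h1).2 rfl
    · rw [disjoint_sup_left]
      refine ⟨disjoint_of_adj fun x y h1 h2 => ?_, IH7⟩
      rcases h1.2 with rfl | rfl
      · exact (no_adj_erase IH3 h2).1 rfl
      · exact (no_adj_erase IH3 h2).2 rfl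
    · intro a' ha'A
      by_cases hEq : a' = a
      · rw [hEq]
        have h1 : r.2.1.neighborSet a = ∅ := by
          ext u
          simp only [SimpleGraph.mem_neighborSet, Set.mem_empty_iff_false, iff_false]
          intro hadj
          exact (no_adj_erase IH2 hadj).1 rfl
        have h2 : (starG (indG H S) a).neighborSet a = (indG H S).neighborSet a := by
          ext u
          simp only [SimpleGraph.mem_neighborSet, starG]
          tauto
        rw [deg_eq_ncard, ns_sup, h1, h2, Set.union_empty, ← deg_eq_ncard]
        exact hadeg.le
      · have h2 : (starG (indG H S) a).neighborSet a' = ∅ := by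
          ext u
          simp only [SimpleGraph.mem_neighborSet, starG, Set.mem_empty_iff_false, iff_false]
          rintro ⟨hadj, h3 | rfl⟩
          · exact hEq h3
          · rcases hbip a' a hadj.1 with ⟨_, hB⟩ | ⟨hB, _⟩
            · exact Set.disjoint_left.mp hdisj haA hB
            · exact Set.disjoint_left.mp hdisj ha'A hB
        rw [deg_eq_ncard, ns_sup, h2, Set.empty_union, ← deg_eq_ncard]
        exact IH10 a' ha'A
  | case2 S hn h IH =>
    rw [process]; simp only [dif_neg hn, dif_pos h]
    obtain ⟨hbS, hbB, hbdeg⟩ := h.choose_spec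
    set b := h.choose with hb_def
    obtain ⟨IH1, IH2, IH3, IH4, IH5, IH6, IH7, IH8, IH9, IH10, IH11⟩ := IH
    set r := process H A B c D (S.erase b) with hr
    have hK' : indG H (S.erase b) ≤ indG H S := indG_mono H (Finset.erase_subset b S)
    have hst : starG (indG H S) b ≤ indG H S := starG_le _ _
    have hr1 : indG H r.1 ≤ indG H (S.erase b) := indG_mono H IH1
    refine ⟨IH1.trans (Finset.erase_subset b S), IH2.trans hK', sup_le hst (IH3.trans hK'),
      ?_, IH5, ?_, ?_, IH8, IH9, IH10, ?_⟩
    · have hcomm : indG H r.1 ⊔ r.2.1 ⊔ (starG (indG H S) b ⊔ r.2.2)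
          = starG (indG H S) b ⊔ (indG H r.1 ⊔ r.2.1 ⊔ r.2.2) := by
        ext x y
        simp only [SimpleGraph.sup_adj]
        tauto
      rw [hcomm, IH4, star_sup_erase H S hbS]
    · rw [disjoint_sup_right]
      refine ⟨disjoint_of_adj fun x y h1 h2 => ?_, IH6⟩
      rcases h2.2 with rfl | rfl
      · exact (no_adj_erase hr1 h1).1 rfl
      · exact (no_adj_erase hr1 h1).2 rfl
    · rw [disjoint_sup_right]
      refine ⟨disjoint_of_adj fun x y h1 h2 => ?_, IH7⟩
      rcases h2.2 with rfl | rfl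
      · exact (no_adj_erase IH2 h1).1 rfl
      · exact (no_adj_erase IH2 h1).2 rfl
    · intro b' hb'B
      by_cases hEq : b' = b
      · rw [hEq]
        have h1 : r.2.2.neighborSet b = ∅ := by
          ext u
          simp only [SimpleGraph.mem_neighborSet, Set.mem_empty_iff_false, iff_false]
          intro hadj
          exact (no_adj_erase IH3 hadj).1 rfl
        have h2 : (starG (indG H S) b).neighborSet b = (indG H S).neighborSet b := by
          ext u
          simp only [SimpleGraph.mem_neighborSet, starG]
          tauto
        rw [deg_eq_ncard, ns_sup, h1, h2, Set.union_empty, ← deg_eq_ncard]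
        exact hbdeg.le
      · have h2 : (starG (indG H S) b).neighborSet b' = ∅ := by
          ext u
          simp only [SimpleGraph.mem_neighborSet, starG, Set.mem_empty_iff_false, iff_false]
          rintro ⟨hadj, h3 | rfl⟩
          · exact hEq h3
          · rcases hbip b' b hadj.1 with ⟨hA', _⟩ | ⟨_, hA'⟩
            · exact Set.disjoint_left.mp hdisj hA' hb'B
            · exact Set.disjoint_left.mp hdisj hA' hbB
        rw [deg_eq_ncard, ns_sup, h2, Set.empty_union, ← deg_eq_ncard]
        exact IH11 b' hb'B
  | case3 S hn1 hn2 =>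
    rw [process]; simp only [dif_neg hn1, dif_neg hn2]
    refine ⟨subset_rfl, bot_le, bot_le, by simp, disjoint_bot_right, disjoint_bot_right,
      disjoint_bot_right, hn1, hn2, ?_, ?_⟩
    · intro a _
      simp only [deg_bot, Nat.cast_zero]
      exact hc
    · intro b _
      simp only [deg_bot, Nat.cast_zero]
      positivity
end Aux

/-- The edges of a bipartite graph H of maximum degree D whose A-side degrees are at most
D/2 can be partitioned into H₀, H₁, H₂ so that in H₀ all B-vertices have degree ≥ D/2 and
all A-vertices have degree ≥ c, H₁ is c-degenerate, and Δ(H₂) ≤ D/2. -/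
theorem stmt13 {V : Type*} [Fintype V] (H : SimpleGraph V) (A B : Set V)
    (hcover : A ∪ B = Set.univ) (hdisj : Disjoint A B)
    (hbip : ∀ u v : V, H.Adj u v → (u ∈ A ∧ v ∈ B) ∨ (u ∈ B ∧ v ∈ A))
    (D : ℕ) (hD : maxDeg H = D)
    (hA : ∀ v ∈ A, (deg H v : ℝ) ≤ (D : ℝ) / 2)
    (c : ℝ) (hc : 0 < c) :
    ∃ H₀ H₁ H₂ : SimpleGraph V,
      H₀ ⊔ H₁ ⊔ H₂ = H ∧
      Disjoint H₀ H₁ ∧ Disjoint H₀ H₂ ∧ Disjoint H₁ H₂ ∧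
      (∀ v ∈ B, v ∈ H₀.support → (D : ℝ) / 2 ≤ (deg H₀ v : ℝ)) ∧
      (∀ v ∈ A, v ∈ H₀.support → c ≤ (deg H₀ v : ℝ)) ∧
      DegenR c H₁ ∧
      (maxDeg H₂ : ℝ) ≤ (D : ℝ) / 2 := by
  classical
  obtain ⟨P1, P2, P3, P4, P5, P6, P7, P8, P9, P10, P11⟩ :=
    process_spec H A B hdisj hbip c hc.le D Finset.univ
  set r := process H A B c D Finset.univ with hr
  have hUniv : indG H Finset.univ = H := by
    ext x y; simp [indG]
  have h1H : r.2.1 ≤ H := by rw [← hUniv]; exact P2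
  have h2H : r.2.2 ≤ H := by rw [← hUniv]; exact P3
  refine ⟨indG H r.1, r.2.1, r.2.2, ?_, P5, P6, P7, ?_, ?_, ?_, ?_⟩
  · rw [P4, hUniv]
  · intro v hvB hsup
    obtain ⟨w, hw⟩ := hsup
    push_neg at P9
    exact P9 v hw.2.1 hvB
  · intro v hvA hsup
    obtain ⟨w, hw⟩ := hsup
    push_neg at P8
    exact P8 v hw.2.1 hvA
  · intro s hs
    by_cases hsA : ∃ a ∈ s, a ∈ A
    · obtain ⟨a, has, haA⟩ := hsA
      refine ⟨a, has, ?_⟩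
      have hsub : ({u | u ∈ s ∧ r.2.1.Adj a u} : Set V) ⊆ r.2.1.neighborSet a :=
        fun u hu => hu.2
      have hcard := Set.ncard_le_ncard hsub (Set.toFinite _)
      calc (({u | u ∈ s ∧ r.2.1.Adj a u} : Set V).ncard : ℝ)
          ≤ (deg r.2.1 a : ℝ) := by rw [deg_eq_ncard]; exact_mod_cast hcard
        _ ≤ c := P10 a haA
    · obtain ⟨v, hv⟩ := hs
      refine ⟨v, hv, ?_⟩
      have hvB : v ∈ B := by
        have hm : v ∈ A ∪ B := by rw [hcover]; trivial
        rcases hm with h | h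
        · exact absurd ⟨v, hv, h⟩ hsA
        · exact h
      have hemp : ({u | u ∈ s ∧ r.2.1.Adj v u} : Set V) = ∅ := by
        ext u
        simp only [Set.mem_setOf_eq, Set.mem_empty_iff_false, iff_false, not_and]
        intro hus hadj
        rcases hbip v u (h1H hadj) with ⟨hA', _⟩ | ⟨_, hA'⟩
        · exact Set.disjoint_left.mp hdisj hA' hvB
        · exact hsA ⟨u, hus, hA'⟩
      rw [hemp, Set.ncard_empty]
      exact_mod_cast hc.le
  · have hdegAll : ∀ v, deg r.2.2 v ≤ D / 2 := by
      intro v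
      have hreal : (deg r.2.2 v : ℝ) ≤ (D : ℝ) / 2 := by
        have hm : v ∈ A ∪ B := by rw [hcover]; trivial
        rcases hm with h | h
        · exact le_trans (by exact_mod_cast deg_mono h2H v) (hA v h)
        · exact P11 v h
      rw [Nat.le_div_iff_mul_le (by norm_num)]
      have h2 : ((deg r.2.2 v * 2 : ℕ) : ℝ) ≤ (D : ℕ) := by push_cast; linarith
      exact_mod_cast h2
    have hmax := maxDeg_le r.2.2 (D / 2) hdegAll
    calc (maxDeg r.2.2 : ℝ) ≤ ((D / 2 : ℕ) : ℝ) := by exact_mod_cast hmax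
      _ ≤ (D : ℝ) / 2 := by
        rw [le_div_iff₀ (by norm_num)]
        exact_mod_cast Nat.div_mul_le_self D 2
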